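/- Let μ be a Borel probability measure on the unit circle ∂D = {z ∈ ℂ : |z| = 1}, and define m(z) = ∫_{∂D} (z − w)^{−1} dμ(w) for z ∈ ℂ ∖ supp μ. Then m(z) ≠ 0 for every z ∈ ℂ with |z| > 1, and m(z) ≠ 0 for every z ∈ ∂D ∖ supp μ. -/

import Mathlib

open MeasureTheory Filter

noncomputable section

/-- The (closed) support of a Borel measure on `ℂ`: the set of points all of whose open
neighborhoods have positive measure. -/
def measSupport (μ : Measure ℂ) : Set ℂ :=
  {z | ∀ U : Set ℂ, IsOpen U → z ∈ U → 0 < μ U}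

/-- The `m`-function of `μ`: `m(z) = ∫ (z - w)⁻¹ dμ(w)`. -/
def mFun (μ : Measure ℂ) (z : ℂ) : ℂ := ∫ w, (z - w)⁻¹ ∂μ

lemma re_pos_of (z w : ℂ) (hzw : z ≠ w)
    (hnum : 0 < z.re * (z - w).re + z.im * (z - w).im) :
    0 < (z * (z - w)⁻¹).re := by
  have hu : z - w ≠ 0 := sub_ne_zero.2 hzw
  have h1 : 0 < Complex.normSq (z - w) := Complex.normSq_pos.2 hu
  rw [← div_eq_mul_inv, Complex.div_re, ← add_div]
  exact div_pos hnum h1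

lemma key (μ : Measure ℂ) [IsProbabilityMeasure μ] (z : ℂ) (C : ℝ)
    (hb : ∀ᵐ w ∂μ, ‖(z - w)⁻¹‖ ≤ C)
    (hpos : ∀ᵐ w ∂μ, 0 ≤ (z * (z - w)⁻¹).re)
    (hsupp : 0 < μ (Function.support fun w => (z * (z - w)⁻¹).re)) :
    mFun μ z ≠ 0 := by
  have hmeas : AEStronglyMeasurable (fun w : ℂ => (z - w)⁻¹) μ :=
    ((measurable_const.sub measurable_id).inv).aestronglyMeasurable
  have hint : Integrable (fun w : ℂ => (z - w)⁻¹) μ :=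
    ⟨hmeas, HasFiniteIntegral.of_bounded hb⟩
  have hint2 : Integrable (fun w : ℂ => z * (z - w)⁻¹) μ := hint.const_mul z
  have hre : Integrable (fun w : ℂ => (z * (z - w)⁻¹).re) μ := hint2.re
  have hpos2 : 0 < ∫ w, (z * (z - w)⁻¹).re ∂μ :=
    (integral_pos_iff_support_of_nonneg_ae hpos hre).2 hsupp
  have heq : (∫ w, (z * (z - w)⁻¹).re ∂μ) = (z * mFun μ z).re := by
    have := integral_re (𝕜 := ℂ) hint2
    simp only [RCLike.re_to_complex] at this
    rw [this, mFun, integral_const_mul]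
  intro h0
  rw [heq, h0, mul_zero] at hpos2
  simp at hpos2

lemma num_pos1 {z w : ℂ} (hz : 1 < ‖z‖) (hw : ‖w‖ = 1) :
    0 < z.re * (z - w).re + z.im * (z - w).im := by
  have hz2 : 1 < z.re ^ 2 + z.im ^ 2 := by
    have := Complex.sq_norm z
    rw [Complex.normSq_apply] at this
    nlinarith [norm_nonneg z]
  have hw2 : w.re ^ 2 + w.im ^ 2 = 1 := by
    have := Complex.sq_norm w
    rw [Complex.normSq_apply] at this
    nlinarith
  simp only [Complex.sub_re, Complex.sub_im]
  nlinarith [sq_nonneg (z.re - w.re), sq_nonneg (z.im - w.im)]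

lemma num_pos2 {z w : ℂ} (hz : ‖z‖ = 1) (hw : ‖w‖ = 1) (hzw : z ≠ w) :
    0 < z.re * (z - w).re + z.im * (z - w).im := by
  have hz2 : z.re ^ 2 + z.im ^ 2 = 1 := by
    have := Complex.sq_norm z
    rw [Complex.normSq_apply] at this
    nlinarith
  have hw2 : w.re ^ 2 + w.im ^ 2 = 1 := by
    have := Complex.sq_norm w
    rw [Complex.normSq_apply] at this
    nlinarith
  have hns : 0 < Complex.normSq (z - w) := Complex.normSq_pos.2 (sub_ne_zero.2 hzw)
  rw [Complex.normSq_apply, Complex.sub_re, Complex.sub_im] at hns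
  simp only [Complex.sub_re, Complex.sub_im]
  nlinarith

/-- If `μ` is a Borel probability measure on the unit circle, then its `m`-function
does not vanish outside the closed unit disk, nor at points of the unit circle lying
outside the support of `μ`. -/
theorem stmt0 (μ : Measure ℂ) [IsProbabilityMeasure μ]
    (hcirc : μ (Metric.sphere (0 : ℂ) 1)ᶜ = 0) :
    (∀ z : ℂ, 1 < ‖z‖ → mFun μ z ≠ 0) ∧
    (∀ z : ℂ, ‖z‖ = 1 → z ∉ measSupport μ → mFun μ z ≠ 0) := by
  have hsph : ∀ᵐ w ∂μ, ‖w‖ = 1 := by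
    rw [ae_iff]
    convert hcirc using 2
    ext w
    simp [Complex.dist_eq]
  have hsphere1 : μ (Metric.sphere (0 : ℂ) 1) = 1 :=
    (prob_compl_eq_zero_iff Metric.isClosed_sphere.measurableSet).1 hcirc
  constructor
  · intro z hz
    refine key μ z (‖z‖ - 1)⁻¹ ?_ ?_ ?_
    · filter_upwards [hsph] with w hw
      rw [norm_inv]
      have h1 : ‖z‖ - 1 ≤ ‖z - w‖ := by
        have := norm_sub_norm_le z w
        rw [hw] at this
        simpa using this
      exact inv_anti₀ (by linarith) h1
    · filter_upwards [hsph] with w hw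
      have hzw : z ≠ w := by intro h; rw [h, hw] at hz; linarith
      exact le_of_lt (re_pos_of z w hzw (num_pos1 hz hw))
    · refine lt_of_lt_of_le ?_ (measure_mono (s := Metric.sphere (0:ℂ) 1) ?_)
      · rw [hsphere1]; norm_num
      · intro w hw
        have hw1 : ‖w‖ = 1 := by
          simpa [Complex.dist_eq] using hw
        have hzw : z ≠ w := by intro h; rw [h, hw1] at hz; linarith
        exact ne_of_gt (re_pos_of z w hzw (num_pos1 hz hw1))
  · intro z hz hzs
    simp only [measSupport, Set.mem_setOf_eq, not_forall] at hzs
    obtain ⟨U, hUopen, hzU, hU0⟩ := hzs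
    have hU0 : μ U = 0 := by simpa [pos_iff_ne_zero, not_not] using hU0
    obtain ⟨r, hr, hball⟩ := Metric.isOpen_iff.1 hUopen z hzU
    have hUae : ∀ᵐ w ∂μ, w ∉ U := (ae_iff).2 (by simpa using hU0)
    have hdist : ∀ w : ℂ, w ∉ U → r ≤ ‖z - w‖ := by
      intro w hw
      by_contra h
      push_neg at h
      exact hw (hball (by simpa [Metric.mem_ball, dist_comm, Complex.dist_eq] using h))
    refine key μ z r⁻¹ ?_ ?_ ?_
    · filter_upwards [hUae] with w hw
      rw [norm_inv]
      exact inv_anti₀ hr (hdist w hw)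
    · filter_upwards [hsph, hUae] with w hw hwU
      have hzw : z ≠ w := fun h => hwU (h ▸ hzU)
      exact le_of_lt (re_pos_of z w hzw (num_pos2 hz hw hzw))
    · refine lt_of_lt_of_le ?_ (measure_mono (s := Metric.sphere (0:ℂ) 1 \ U) ?_)
      · have : μ (Metric.sphere (0:ℂ) 1 \ U) = 1 := by
          refine (prob_compl_eq_zero_iff (Metric.isClosed_sphere.measurableSet.diff hUopen.measurableSet)).1 ?_
          rw [Set.diff_eq, Set.compl_inter, compl_compl]
          exact le_antisymm (le_trans (measure_union_le _ _) (by rw [hU0, hcirc]; simp)) zero_le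
        rw [this]; norm_num
      · rintro w ⟨hwsph, hwU⟩
        have hw1 : ‖w‖ = 1 := by simpa [Complex.dist_eq] using hwsph
        have hzw : z ≠ w := fun h => hwU (h ▸ hzU)
        exact ne_of_gt (re_pos_of z w hzw (num_pos2 hz hw1 hzw))

end
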